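/- Let F be continuous and strictly increasing on [0,K] with F(0)=0, F(K)=1, and derivative f > 0 on (0,K). Let N ≥ 2, let W₁ ≥ W₂ ≥ ⋯ ≥ W_N ≥ 0 with average prize W̄ = (1/N)∑_k W_k satisfying W̄ > W_N, and let 0 < c < W̄ − W_N. Then λ := F⁻¹(1 − c/(W̄ − W_N)) is the unique λ ∈ (0,K) satisfying the symmetric-equilibrium indifference condition W_N · (1 − F(λ)) = −c + ∫_λ^K Π_λ(x) · f(x) dx, where Π_λ(x) = ∑_{k=1}^N W_k · C(N−1,k−1) · G_λ(x)^(N−k) · (1 − G_λ(x))^(k−1) and G_λ(x) = (F(x) − F(λ))/(1 − F(λ)). In particular, the equilibrium acceptance probability is 1 − F(λ) = c/(W̄ − W_N), independent of F. -/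

import Mathlib

open intervalIntegral

lemma nat_id1 (N i : ℕ) (h : i < N) :
    (N - i) * N.choose i = N * (N-1).choose i := by
  have h1 := Nat.choose_succ_right_eq N i
  have h2 := Nat.add_one_mul_choose_eq (N-1) i
  rw [Nat.sub_add_cancel (by omega : 1 ≤ N)] at h2
  rw [mul_comm, ← h1, ← h2]

lemma nat_id2 (N i : ℕ) (hi : 1 ≤ i) (hN : 1 ≤ N) :
    i * N.choose i = N * (N-1).choose (i-1) := by
  have h2 := Nat.add_one_mul_choose_eq (N-1) (i-1)
  rw [Nat.sub_add_cancel hN, Nat.sub_add_cancel hi] at h2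
  rw [h2, mul_comm]

lemma T_hasDerivAt (N i : ℕ) (hi : i < N) (u : ℝ) :
    HasDerivAt (fun u : ℝ => (N.choose (N - i) : ℝ) * u ^ (N - i) * (1 - u) ^ i)
      ((N:ℝ) * ((N-1).choose i) * u ^ (N-1-i) * (1-u) ^ i
        - (i:ℝ) * (N.choose (N - i)) * u ^ (N - i) * (1 - u) ^ (i-1)) u := by
  have hu : HasDerivAt (fun u : ℝ => u ^ (N - i)) ((N - i : ℕ) * u ^ (N - i - 1)) u :=
    hasDerivAt_pow (N - i) u
  have hv : HasDerivAt (fun u : ℝ => (1 - u) ^ i) (((i:ℕ) * (1 - u) ^ (i - 1)) * (-1)) u := by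
    have h1 : HasDerivAt (fun u : ℝ => 1 - u) (-1) u := by
      simpa using (hasDerivAt_id u).const_sub 1
    exact (hasDerivAt_pow i (1 - u)).comp u h1
  have H := (hu.const_mul (N.choose (N - i) : ℝ)).mul hv
  convert H using 1
  · rfl
  · rfl
  · rfl
  have e1 : N - i - 1 = N - 1 - i := by omega
  have c1 : ((N - i : ℕ) : ℝ) * (N.choose (N-i) : ℝ) = (N:ℝ) * ((N-1).choose i : ℝ) := by
    rw [Nat.choose_symm hi.le]
    exact_mod_cast congrArg (Nat.cast (R := ℝ)) (nat_id1 N i hi)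
  rw [e1]
  linear_combination (-(u ^ (N-1-i) * (1-u) ^ i)) * c1

lemma sum_hasDerivAt (N k : ℕ) (hk : k < N) (u : ℝ) :
    HasDerivAt (fun u : ℝ => ∑ i ∈ Finset.range (k+1),
        ((N.choose (N - i) : ℝ) * u ^ (N - i) * (1 - u) ^ i))
      ((N:ℝ) * ((N-1).choose k) * u ^ (N-1-k) * (1-u) ^ k) u := by
  induction k with
  | zero =>
      have h0 := T_hasDerivAt N 0 (by omega) u
      simp only [Nat.cast_zero, zero_mul, sub_zero] at h0
      simp only [zero_add, Finset.sum_range_one]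
      convert h0 using 1
  | succ k ih =>
      have hk' : k < N := by omega
      have h1 := ih hk'
      have h2 := T_hasDerivAt N (k+1) hk u
      have H := h1.add h2
      have hfun : (fun u : ℝ => ∑ i ∈ Finset.range (k+2),
          ((N.choose (N - i) : ℝ) * u ^ (N - i) * (1 - u) ^ i))
          = fun u : ℝ => (∑ i ∈ Finset.range (k+1),
          ((N.choose (N - i) : ℝ) * u ^ (N - i) * (1 - u) ^ i))
          + ((N.choose (N - (k+1)) : ℝ) * u ^ (N - (k+1)) * (1 - u) ^ (k+1)) := by
        funext u; rw [Finset.sum_range_succ]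
      rw [hfun]
      convert H using 1
      · rfl
      · rfl
      · rfl
      have c2 : ((k+1 : ℕ):ℝ) * (N.choose (N - (k+1)) : ℝ)
          = (N:ℝ) * ((N-1).choose k : ℝ) := by
        rw [Nat.choose_symm hk.le]
        have := nat_id2 N (k+1) (by omega) (by omega)
        simp only [Nat.add_sub_cancel] at this
        exact_mod_cast congrArg (Nat.cast (R := ℝ)) this
      have e2 : N - 1 - k = N - (k+1) := by omega
      have e3 : (k+1) - 1 = k := by omega
      rw [e3, e2] at *
      linear_combination (u ^ (N-(k+1)) * (1-u) ^ k) * c2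

lemma key_integral
    (K : ℝ) (F f : ℝ → ℝ)
    (hFcont : ContinuousOn F (Set.Icc 0 K))
    (hFmono : StrictMonoOn F (Set.Icc 0 K))
    (hFK : F K = 1)
    (hderiv : ∀ x ∈ Set.Ioo 0 K, HasDerivAt F (f x) x)
    (hfpos : ∀ x ∈ Set.Ioo 0 K, 0 < f x)
    (N : ℕ) (hN : 1 ≤ N)
    (W : ℕ → ℝ) (hW : ∀ k, k < N → 0 ≤ W k)
    (lam : ℝ) (hlam : lam ∈ Set.Ioo 0 K) :
    ∫ x in lam..K, (∑ k ∈ Finset.range N,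
        W k * (Nat.choose (N - 1) k : ℝ)
          * ((F x - F lam) / (1 - F lam)) ^ (N - 1 - k)
          * (1 - (F x - F lam) / (1 - F lam)) ^ k) * f x
      = (1 - F lam) * ((∑ k ∈ Finset.range N, W k) / N) := by
  obtain ⟨hlam0, hlamK⟩ := hlam
  have hle : lam ≤ K := hlamK.le
  have hlamIcc : lam ∈ Set.Icc 0 K := ⟨hlam0.le, hle⟩
  have hKIcc : K ∈ Set.Icc 0 K := ⟨(hlam0.trans hlamK).le, le_refl K⟩
  have hFlam_lt : F lam < 1 := by
    have := hFmono hlamIcc hKIcc hlamK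
    rwa [hFK] at this
  set a := F lam with ha
  set s := 1 - a with hs
  have hs0 : 0 < s := by simp [hs]; linarith
  have hNR : (0:ℝ) < N := by exact_mod_cast hN
  set Φ : ℝ → ℝ := fun x => s * ((1/(N:ℝ)) * ∑ k ∈ Finset.range N,
      W k * ∑ i ∈ Finset.range (k+1),
        ((N.choose (N - i) : ℝ) * ((F x - a)/s) ^ (N - i) * (1 - (F x - a)/s) ^ i)) with hΦ
  set Ψ : ℝ → ℝ := fun x => (∑ k ∈ Finset.range N,
        W k * (Nat.choose (N - 1) k : ℝ)
          * ((F x - a) / s) ^ (N - 1 - k)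
          * (1 - (F x - a) / s) ^ k) * f x with hΨ
  -- derivative
  have hΦderiv : ∀ x ∈ Set.Ioo lam K, HasDerivAt Φ (Ψ x) x := by
    intro x hx
    have hx0 : x ∈ Set.Ioo 0 K := ⟨hlam0.trans hx.1, hx.2⟩
    have hg : HasDerivAt (fun x => (F x - a)/s) (f x / s) x :=
      ((hderiv x hx0).sub_const a).div_const s
    have hsum : ∀ k ∈ Finset.range N,
        HasDerivAt (fun x => W k * ∑ i ∈ Finset.range (k+1),
          ((N.choose (N - i) : ℝ) * ((F x - a)/s) ^ (N - i) * (1 - (F x - a)/s) ^ i))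
          (W k * ((N:ℝ) * (((N-1).choose k : ℕ) : ℝ) * ((F x - a)/s) ^ (N-1-k)
            * (1 - (F x - a)/s) ^ k * (f x / s))) x := by
      intro k hk
      have hk' : k < N := Finset.mem_range.mp hk
      have h1 := (sum_hasDerivAt N k hk' ((F x - a)/s)).comp x hg
      exact (h1.const_mul (W k))
    have H := ((HasDerivAt.fun_sum hsum).const_mul (1/(N:ℝ))).const_mul s
    have hsne : s ≠ 0 := ne_of_gt hs0
    have hNne : (N:ℝ) ≠ 0 := ne_of_gt hNR
    have hval : s * ((1/(N:ℝ)) * ∑ k ∈ Finset.range N,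
        (W k * ((N:ℝ) * (((N-1).choose k : ℕ) : ℝ) * ((F x - a)/s) ^ (N-1-k)
            * (1 - (F x - a)/s) ^ k * (f x / s)))) = Ψ x := by
      simp only [hΨ, Finset.mul_sum, Finset.sum_mul]
      refine Finset.sum_congr rfl fun k hk => ?_
      field_simp
    exact hval ▸ H
  -- continuity
  have hFc : ContinuousOn F (Set.Icc lam K) :=
    hFcont.mono (Set.Icc_subset_Icc hlam0.le le_rfl)
  have hgc : ContinuousOn (fun x => (F x - a)/s) (Set.Icc lam K) :=
    (hFc.sub continuousOn_const).div_const s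
  have hΦcont : ContinuousOn Φ (Set.Icc lam K) := by
    apply continuousOn_const.mul
    apply continuousOn_const.mul
    apply continuousOn_finset_sum
    intro k _
    apply continuousOn_const.mul
    apply continuousOn_finset_sum
    intro i _
    exact (continuousOn_const.mul (hgc.pow _)).mul ((continuousOn_const.sub hgc).pow _)
  -- nonnegativity
  have hbounds : ∀ x ∈ Set.Ioo lam K, 0 ≤ (F x - a)/s ∧ (F x - a)/s ≤ 1 := by
    intro x hx
    have hxIcc : x ∈ Set.Icc 0 K := ⟨(hlam0.trans hx.1).le, hx.2.le⟩
    have h1 : a ≤ F x := (hFmono hlamIcc hxIcc hx.1).le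
    have h2 : F x ≤ 1 := by
      have := hFmono hxIcc hKIcc hx.2
      rw [hFK] at this; exact this.le
    constructor
    · exact div_nonneg (by linarith) hs0.le
    · rw [div_le_one hs0]; simp [hs]; linarith
  have hΨnonneg : ∀ x ∈ Set.Ioo lam K, 0 ≤ Ψ x := by
    intro x hx
    have hb := hbounds x hx
    have hx0 : x ∈ Set.Ioo 0 K := ⟨hlam0.trans hx.1, hx.2⟩
    apply mul_nonneg _ (hfpos x hx0).le
    apply Finset.sum_nonneg
    intro k hk
    have hk' : k < N := Finset.mem_range.mp hk
    apply mul_nonneg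
    apply mul_nonneg
    apply mul_nonneg (hW k hk') (by positivity)
    · exact pow_nonneg hb.1 _
    · exact pow_nonneg (by linarith [hb.2]) _
  -- integrability
  have hInt : IntervalIntegrable Ψ MeasureTheory.volume lam K := by
    rw [intervalIntegrable_iff_integrableOn_Ioc_of_le hle]
    exact intervalIntegral.integrableOn_deriv_of_nonneg hΦcont hΦderiv hΨnonneg
  -- FTC
  have hFTC := intervalIntegral.integral_eq_sub_of_hasDeriv_right_of_le hle hΦcont
      (fun x hx => (hΦderiv x hx).hasDerivWithinAt) hInt
  have hΦlam : Φ lam = 0 := by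
    rw [hΦ]
    simp only [← ha, sub_self, zero_div]
    have : ∀ k ∈ Finset.range N, W k * ∑ i ∈ Finset.range (k+1),
        ((N.choose (N - i) : ℝ) * (0:ℝ) ^ (N - i) * (1 - (0:ℝ)) ^ i) = 0 := by
      intro k hk
      have hk' : k < N := Finset.mem_range.mp hk
      have : ∑ i ∈ Finset.range (k+1),
          ((N.choose (N - i) : ℝ) * (0:ℝ) ^ (N - i) * (1 - (0:ℝ)) ^ i) = 0 := by
        apply Finset.sum_eq_zero
        intro i hi
        have hi' : i < k + 1 := Finset.mem_range.mp hi
        have : (0:ℝ) ^ (N - i) = 0 := zero_pow (by omega)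
        rw [this]; ring
      rw [this, mul_zero]
    rw [Finset.sum_congr rfl this]
    simp
  have hΦK : Φ K = s * ((∑ k ∈ Finset.range N, W k) / N) := by
    have hgK : (F K - a)/s = 1 := by
      rw [hFK]; field_simp; exact hs.symm
    simp only [hΦ]
    rw [hgK]
    have : ∀ k ∈ Finset.range N, W k * ∑ i ∈ Finset.range (k+1),
        ((N.choose (N - i) : ℝ) * (1:ℝ) ^ (N - i) * (1 - (1:ℝ)) ^ i) = W k := by
      intro k hk
      have : ∑ i ∈ Finset.range (k+1),
          ((N.choose (N - i) : ℝ) * (1:ℝ) ^ (N - i) * (1 - (1:ℝ)) ^ i) = 1 := by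
        rw [Finset.sum_eq_single_of_mem 0 (Finset.mem_range.mpr (by omega))]
        · simp
        · intro i hi hi0
          have : (1 - (1:ℝ)) ^ i = 0 := by
            rw [sub_self]; exact zero_pow hi0
          rw [this]; ring
      rw [this, mul_one]
    rw [Finset.sum_congr rfl this]
    ring
  calc ∫ x in lam..K, (∑ k ∈ Finset.range N,
        W k * (Nat.choose (N - 1) k : ℝ)
          * ((F x - a) / s) ^ (N - 1 - k)
          * (1 - (F x - a) / s) ^ k) * f x
      = ∫ x in lam..K, Ψ x := by rw [hΨ]
    _ = Φ K - Φ lam := hFTC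
    _ = (1 - a) * ((∑ k ∈ Finset.range N, W k) / N) := by rw [hΦK, hΦlam, hs]; ring

/-- Symmetric equilibrium with rank-order prizes `W 0 ≥ ⋯ ≥ W (N-1) ≥ 0`
(`W k` is the prize for rank `k+1`): there is a unique threshold `λ ∈ (0,K)`
satisfying the indifference condition
`W_N·(1 − F λ) = −c + ∫_λ^K Π_λ(x)·f x dx`, and it satisfies
`1 − F λ = c/(W̄ − W_N)`, independent of `F`. -/
theorem stmt_5
    (K : ℝ) (hK : 0 < K)
    (F f : ℝ → ℝ)
    (hFcont : ContinuousOn F (Set.Icc 0 K))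
    (hFmono : StrictMonoOn F (Set.Icc 0 K))
    (hF0 : F 0 = 0) (hFK : F K = 1)
    (hderiv : ∀ x ∈ Set.Ioo 0 K, HasDerivAt F (f x) x)
    (hfpos : ∀ x ∈ Set.Ioo 0 K, 0 < f x)
    (N : ℕ) (hN : 2 ≤ N)
    (W : ℕ → ℝ)
    (hWmono : ∀ k, k + 1 < N → W (k + 1) ≤ W k)
    (hWlast : 0 ≤ W (N - 1))
    (Wbar : ℝ) (hWbar : Wbar = (∑ k ∈ Finset.range N, W k) / N)
    (hgap : W (N - 1) < Wbar)
    (c : ℝ) (hc : 0 < c) (hcgap : c < Wbar - W (N - 1)) :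
    ∃ lam ∈ Set.Ioo (0:ℝ) K,
      1 - F lam = c / (Wbar - W (N - 1)) ∧
      (W (N - 1) * (1 - F lam)
        = -c + ∫ x in lam..K,
            (∑ k ∈ Finset.range N,
              W k * (Nat.choose (N - 1) k : ℝ)
                * ((F x - F lam) / (1 - F lam)) ^ (N - 1 - k)
                * (1 - (F x - F lam) / (1 - F lam)) ^ k) * f x) ∧
      ∀ lam' ∈ Set.Ioo (0:ℝ) K,
        (W (N - 1) * (1 - F lam')
          = -c + ∫ x in lam'..K,
              (∑ k ∈ Finset.range N,
                W k * (Nat.choose (N - 1) k : ℝ)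
                  * ((F x - F lam') / (1 - F lam')) ^ (N - 1 - k)
                  * (1 - (F x - F lam') / (1 - F lam')) ^ k) * f x)
        → lam' = lam := by
  have hWnn : ∀ k, k < N → 0 ≤ W k := by
    have step : ∀ m, m ≤ N - 1 → W (N-1) ≤ W (N-1-m) := by
      intro m
      induction m with
      | zero => intro _; simp
      | succ m ih =>
        intro hm
        have h1 := ih (by omega)
        have h2 : W (N-1-m) ≤ W (N-1-(m+1)) := by
          have := hWmono (N-1-(m+1)) (by omega)
          have e : N-1-(m+1)+1 = N-1-m := by omega
          rwa [e] at this
        linarith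
    intro k hk
    have h := step (N-1-k) (by omega)
    have e : N-1-(N-1-k) = k := by omega
    rw [e] at h
    linarith
  set g : ℝ := Wbar - W (N - 1) with hgdef
  have hg0 : 0 < g := by simp [hgdef]; linarith
  have hcg0 : 0 < c / g := div_pos hc hg0
  have hcg1 : c / g < 1 := (div_lt_one hg0).mpr hcgap
  -- the equation is equivalent to F μ = 1 - c/g
  have keyeq : ∀ μ ∈ Set.Ioo (0:ℝ) K,
      ((W (N - 1) * (1 - F μ)
        = -c + ∫ x in μ..K,
            (∑ k ∈ Finset.range N,
              W k * (Nat.choose (N - 1) k : ℝ)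
                * ((F x - F μ) / (1 - F μ)) ^ (N - 1 - k)
                * (1 - (F x - F μ) / (1 - F μ)) ^ k) * f x)
        ↔ F μ = 1 - c / g) := by
    intro μ hμ
    have hint := key_integral K F f hFcont hFmono hFK hderiv hfpos N (by omega) W hWnn μ hμ
    rw [hint, ← hWbar]
    constructor
    · intro h
      have h2 : g * (1 - F μ) = c := by rw [hgdef]; linarith [h]
      have h3 : 1 - F μ = c / g := by
        rw [eq_div_iff hg0.ne']
        linarith [h2]
      linarith
    · intro h
      rw [h, hgdef]
      have hne : Wbar - W (N - 1) ≠ 0 := by linarith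
      field_simp
      ring
  -- existence of lam via IVT
  have hsub := intermediate_value_Icc hK.le hFcont
  have ht : (1 - c/g) ∈ Set.Icc (F 0) (F K) := by
    rw [hF0, hFK]
    constructor <;> linarith
  obtain ⟨lam, hlamIcc, hFlam⟩ := hsub ht
  have hlamIoo : lam ∈ Set.Ioo (0:ℝ) K := by
    constructor
    · rcases eq_or_lt_of_le hlamIcc.1 with h | h
      · exfalso; rw [← h, hF0] at hFlam; linarith
      · exact h
    · rcases eq_or_lt_of_le hlamIcc.2 with h | h
      · exfalso; rw [h, hFK] at hFlam; linarith
      · exact h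
  refine ⟨lam, hlamIoo, ?_, ?_, ?_⟩
  · rw [hFlam]; ring
  · exact (keyeq lam hlamIoo).mpr hFlam
  · intro lam' hlam' heq
    have hF' : F lam' = 1 - c / g := (keyeq lam' hlam').mp heq
    have : F lam' = F lam := by rw [hF', hFlam]
    exact hFmono.injOn ⟨hlam'.1.le, hlam'.2.le⟩ hlamIcc this
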